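/- The GF(2)-subspaces W_i = span(β₁, ..., β_i) determined by a Cantor basis (β₁, ..., β_{2^L}) of GF(2^{2^L}) are independent of the choice of the Cantor basis: if (β₁, ..., β_{2^L}) and (γ₁, ..., γ_{2^L}) are two Cantor bases, then span(β₁,...,β_i) = span(γ₁,...,γ_i) for all i. -/

import Mathlib

set_option maxHeartbeats 1000000
set_option synthInstance.maxHeartbeats 1000000
section Aux
open LinearMap Submodule

section Phi
variable (K : Type*) [Field K] [Algebra (ZMod 2) K]

/-- The `ZMod 2`-linear map `x ↦ x^2 - x`. -/
noncomputable def cantorPhi : K →ₗ[ZMod 2] K where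
  toFun x := x ^ 2 - x
  map_add' x y := by
    have h2 : (2 : K) = 0 := by
      have h := map_ofNat (algebraMap (ZMod 2) K) 2
      have h0 : ((OfNat.ofNat 2 : ZMod 2)) = 0 := by decide
      rw [h0, map_zero] at h
      exact h.symm
    show (x + y) ^ 2 - (x + y) = (x ^ 2 - x) + (y ^ 2 - y)
    have hsq : (x + y) ^ 2 = x ^ 2 + y ^ 2 := by
      rw [add_sq, h2]; ring
    rw [hsq]; ring
  map_smul' c x := by
    have hc : c = 0 ∨ c = 1 := by revert c; decide
    rcases hc with rfl | rfl <;> simp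

variable {K}

lemma cantorPhi_apply (x : K) : cantorPhi K x = x ^ 2 - x := rfl

lemma finrank_ker_cantorPhi_le (K : Type*) [Field K] [Algebra (ZMod 2) K] :
    Module.finrank (ZMod 2) (ker (cantorPhi K)) ≤ 1 := by
  have hle : ker (cantorPhi K) ≤ span (ZMod 2) {(1 : K)} := by
    intro x hx
    have hx0 : x ^ 2 - x = 0 := hx
    have hx' : x * (x - 1) = 0 := by linear_combination hx0
    rcases mul_eq_zero.1 hx' with h | h
    · simp [h]
    · have : x = 1 := by linear_combination h
      simpa [this] using mem_span_singleton_self (1 : K)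
  calc Module.finrank (ZMod 2) (ker (cantorPhi K))
      ≤ Module.finrank (ZMod 2) (span (ZMod 2) {(1 : K)}) :=
        Submodule.finrank_mono hle
    _ = 1 := finrank_span_singleton one_ne_zero
end Phi

section KerPow
variable {k V : Type*} [Field k] [AddCommGroup V] [Module k V] [FiniteDimensional k V]

lemma finrank_ker_pow_succ_le (f : V →ₗ[k] V) (i : ℕ) :
    Module.finrank k (ker (f ^ (i + 1))) ≤
      Module.finrank k (ker (f ^ i)) + Module.finrank k (ker f) := by
  set p := ker (f ^ (i + 1)) with hp
  set g := f.domRestrict p with hg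
  have hrn := g.finrank_range_add_finrank_ker
  have hrange : range g ≤ ker (f ^ i) := by
    rintro y ⟨x, rfl⟩
    have hx : (f ^ (i + 1)) (x : V) = 0 := x.2
    have : (f ^ i) (f (x : V)) = 0 := by
      rw [← Module.End.mul_apply, ← pow_succ]
      exact hx
    simpa [hg] using this
  have hker : Submodule.map p.subtype (ker g) ≤ ker f := by
    rintro y ⟨x, hx, rfl⟩
    simpa [hg] using hx
  have h1 : Module.finrank k (range g) ≤ Module.finrank k (ker (f ^ i)) :=
    Submodule.finrank_mono hrange
  have h2 : Module.finrank k (ker g) ≤ Module.finrank k (ker f) := by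
    rw [← Submodule.finrank_map_subtype_eq p (ker g)]
    exact Submodule.finrank_mono hker
  have hfp : Module.finrank k (range g) + Module.finrank k (ker g) =
      Module.finrank k p := hrn
  omega

end KerPow

section Main

variable {L : ℕ}

local notation "K" => GaloisField 2 (2 ^ L)

lemma span_eq_ker_pow (hL : 0 < L)
    (b : Module.Basis (Fin (2 ^ L)) (ZMod 2) K)
    (hb1 : b ⟨0, Nat.two_pow_pos L⟩ = 1)
    (hb : ∀ i : ℕ, ∀ h : i + 1 < 2 ^ L,
      (b ⟨i + 1, h⟩) ^ 2 - b ⟨i + 1, h⟩ = b ⟨i, Nat.lt_of_succ_lt h⟩)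
    (i : ℕ) (hi : i ≤ 2 ^ L) :
    Submodule.span (ZMod 2) (b '' {j : Fin (2 ^ L) | (j : ℕ) < i}) =
      ker ((cantorPhi K) ^ i) := by
  -- each basis vector is killed by enough iterations of φ
  have hkill : ∀ m : ℕ, ∀ h : m < 2 ^ L,
      ((cantorPhi K) ^ (m + 1)) (b ⟨m, h⟩) = 0 := by
    intro m
    induction m with
    | zero =>
      intro h
      have : cantorPhi K (b ⟨0, h⟩) = 0 := by
        rw [cantorPhi_apply, hb1]; ring
      simpa [pow_one] using this
    | succ m ih =>
      intro h
      have hm : m < 2 ^ L := by omega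
      have hstep : cantorPhi K (b ⟨m + 1, h⟩) = b ⟨m, hm⟩ := by
        rw [cantorPhi_apply]; exact hb m h
      calc ((cantorPhi K) ^ (m + 2)) (b ⟨m + 1, h⟩)
          = ((cantorPhi K) ^ (m + 1)) (cantorPhi K (b ⟨m + 1, h⟩)) := by
            rw [pow_succ, Module.End.mul_apply]
        _ = ((cantorPhi K) ^ (m + 1)) (b ⟨m, hm⟩) := by rw [hstep]
        _ = 0 := ih hm
  -- span ≤ ker
  have hle : Submodule.span (ZMod 2) (b '' {j : Fin (2 ^ L) | (j : ℕ) < i}) ≤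
      ker ((cantorPhi K) ^ i) := by
    rw [Submodule.span_le]
    rintro y ⟨j, hj, rfl⟩
    have hj' : (j : ℕ) < i := hj
    have hsplit : i = (i - ((j : ℕ) + 1)) + ((j : ℕ) + 1) := by omega
    rw [SetLike.mem_coe, mem_ker, hsplit, pow_add, Module.End.mul_apply]
    have : ((cantorPhi K) ^ ((j : ℕ) + 1)) (b j) = 0 := by
      have := hkill (j : ℕ) j.2
      simpa using this
    rw [this, map_zero]
  -- finrank of the span is i
  have hfr_span : Module.finrank (ZMod 2)
      (Submodule.span (ZMod 2) (b '' {j : Fin (2 ^ L) | (j : ℕ) < i})) = i := by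
    have hrange : Set.range (fun t : Fin i => b (Fin.castLE hi t)) =
        b '' {j : Fin (2 ^ L) | (j : ℕ) < i} := by
      ext y
      constructor
      · rintro ⟨t, rfl⟩
        exact ⟨Fin.castLE hi t, t.2, rfl⟩
      · rintro ⟨j, hj, rfl⟩
        exact ⟨⟨(j : ℕ), hj⟩, congrArg b (Fin.ext rfl)⟩
    have hli : LinearIndependent (ZMod 2) (fun t : Fin i => b (Fin.castLE hi t)) :=
      b.linearIndependent.comp _ (Fin.castLE_injective hi)
    rw [← hrange, finrank_span_eq_card hli, Fintype.card_fin]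
  -- finrank of the kernel is at most i
  have hfr_ker : ∀ m : ℕ, Module.finrank (ZMod 2) (ker ((cantorPhi K) ^ m)) ≤ m := by
    intro m
    induction m with
    | zero => rw [pow_zero]; rw [Module.End.one_eq_id, LinearMap.ker_id, finrank_bot]
    | succ m ih =>
      have h1 := finrank_ker_pow_succ_le (cantorPhi K) m
      have h2 := finrank_ker_cantorPhi_le (GaloisField 2 (2 ^ L))
      omega
  exact Submodule.eq_of_le_of_finrank_le hle (by rw [hfr_span]; exact hfr_ker i)

end Main
end Aux

/-- The subspaces `Wᵢ = span(β₁, …, βᵢ)` determined by a Cantor basis of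
`GF(2^(2^L))` do not depend on the choice of the Cantor basis. -/
theorem cantor_subspaces_unique (L : ℕ) (hL : 0 < L)
    (b c : Module.Basis (Fin (2 ^ L)) (ZMod 2) (GaloisField 2 (2 ^ L)))
    (hb1 : b ⟨0, by positivity⟩ = 1)
    (hb : ∀ i : ℕ, ∀ h : i + 1 < 2 ^ L,
      (b ⟨i + 1, h⟩) ^ 2 - b ⟨i + 1, h⟩ = b ⟨i, by omega⟩)
    (hc1 : c ⟨0, by positivity⟩ = 1)
    (hc : ∀ i : ℕ, ∀ h : i + 1 < 2 ^ L,
      (c ⟨i + 1, h⟩) ^ 2 - c ⟨i + 1, h⟩ = c ⟨i, by omega⟩) :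
    ∀ i : ℕ, i ≤ 2 ^ L →
      Submodule.span (ZMod 2) (b '' {j : Fin (2 ^ L) | (j : ℕ) < i}) =
      Submodule.span (ZMod 2) (c '' {j : Fin (2 ^ L) | (j : ℕ) < i}) := by
  intro i hi
  rw [span_eq_ker_pow hL b hb1 hb i hi, span_eq_ker_pow hL c hc1 hc i hi]
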